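/- Consider the stochastic Banach–Picard iteration x_i^{ℓ+1} = (1 − u_i^ℓ) x_i^ℓ + u_i^ℓ T_i x^ℓ + u_i^ℓ e_i^ℓ under the stated stochastic framework, where T is ζ-quasi-contractive with ζ ∈ (0,1) and x* = (x₁*, …, x_n*) is a fixed point of T. Then for each coordinate i = 1, …, n and every ℓ ∈ ℕ: E[‖x_i^ℓ − x_i*‖_i] ≤ χ_i^ℓ ‖x_i⁰ − x_i*‖_i + p_i ((1 − χ_i^ℓ)/(1 − χ_i)) sup_ℓ μ_i^ℓ, where χ_i := 1 − p_i + p_i ζ. -/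

import Mathlib

open MeasureTheory ProbabilityTheory Real

/-- **Stochastic Banach–Picard iteration, quasi-contractive case: convergence in mean.**
For the iteration `x_i^{ℓ+1} = (1 − u_i^ℓ) x_i^ℓ + u_i^ℓ T_i x^ℓ + u_i^ℓ e_i^ℓ` on the direct
sum of Hilbert spaces `H i`, with `T` ζ-quasi-contractive and fixed point `x*`, i.i.d.
update indicators `u^ℓ` with `P(u_i^ℓ = 1) = p_i > 0`, additive errors with
`E[‖e_i^ℓ‖] = μ_i^ℓ` and `{u^ℓ}` independent of `{e^ℓ}`, we have for every coordinate `i`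
and every `ℓ`:
`E[‖x_i^ℓ − x_i*‖] ≤ χ_i^ℓ ‖x_i⁰ − x_i*‖ + p_i ((1 − χ_i^ℓ)/(1 − χ_i)) sup_ℓ μ_i^ℓ`,
where `χ_i := 1 − p_i + p_i ζ`. -/
theorem stochastic_banach_picard_contractive_mean
    {Ω : Type*} [MeasurableSpace Ω] (μ : Measure Ω) [IsProbabilityMeasure μ]
    {n : ℕ} (H : Fin n → Type*)
    [∀ i, NormedAddCommGroup (H i)] [∀ i, InnerProductSpace ℝ (H i)]
    [∀ i, CompleteSpace (H i)] [∀ i, MeasurableSpace (H i)] [∀ i, BorelSpace (H i)]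
    -- the operator: ζ-quasi-contractive with fixed point x*
    (T : (∀ i, H i) → ∀ i, H i) (ζ : ℝ) (hζ : ζ ∈ Set.Ioo (0 : ℝ) 1)
    (hT : ∀ x y : ∀ i, H i, T y = y → ∀ i, ‖T x i - y i‖ ≤ ζ * ‖x i - y i‖)
    (xstar : ∀ i, H i) (hxstar : T xstar = xstar)
    -- the random update indicators: i.i.d., {0,1}-valued, with P(u_i = 1) = p_i > 0
    (u : ℕ → Ω → Fin n → ℝ) (humeas : ∀ ℓ, Measurable (u ℓ))
    (h01 : ∀ ℓ ω i, u ℓ ω i = 0 ∨ u ℓ ω i = 1)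
    (p : Fin n → ℝ) (hp : ∀ i, 0 < p i)
    (hpP : ∀ ℓ i, μ {ω | u ℓ ω i = 1} = ENNReal.ofReal (p i))
    (huindep : iIndepFun u μ)
    (huid : ∀ ℓ ℓ', IdentDistrib (u ℓ) (u ℓ') μ μ)
    -- the additive errors: integrable norms with mean m ℓ i, sup_ℓ m ℓ i < ∞
    (e : ℕ → Ω → ∀ i, H i) (hemeas : ∀ ℓ, Measurable (e ℓ))
    (m : ℕ → Fin n → ℝ)
    (heint : ∀ ℓ i, Integrable (fun ω => ‖e ℓ ω i‖) μ)
    (hm : ∀ ℓ i, ∫ ω, ‖e ℓ ω i‖ ∂μ = m ℓ i)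
    (hmbdd : ∀ i, BddAbove (Set.range fun ℓ => m ℓ i))
    -- the processes {u^ℓ} and {e^ℓ} are independent of each other
    (hue : IndepFun (fun ω => fun ℓ => u ℓ ω) (fun ω => fun ℓ => e ℓ ω) μ)
    -- the iteration, with deterministic initial condition x0
    (x0 : ∀ i, H i) (X : ℕ → Ω → ∀ i, H i)
    (hX0 : ∀ ω, X 0 ω = x0)
    (hXrec : ∀ ℓ ω i, X (ℓ + 1) ω i
      = (1 - u ℓ ω i) • X ℓ ω i + u ℓ ω i • T (X ℓ ω) i + u ℓ ω i • e ℓ ω i)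
    (hXint : ∀ ℓ i, Integrable (fun ω => ‖X ℓ ω i - xstar i‖) μ)
    (ℓ : ℕ) (i : Fin n) :
    ∫ ω, ‖X ℓ ω i - xstar i‖ ∂μ
      ≤ (1 - p i + p i * ζ) ^ ℓ * ‖x0 i - xstar i‖
        + p i * ((1 - (1 - p i + p i * ζ) ^ ℓ) / (1 - (1 - p i + p i * ζ)))
            * (⨆ ℓ' : ℕ, m ℓ' i) := by
  obtain ⟨hζ0, hζ1⟩ := hζ
  have hpi := hp i
  -- `p i ≤ 1`
  have hpi1 : p i ≤ 1 := by
    have h1 : μ {ω | u 0 ω i = 1} ≤ 1 := prob_le_one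
    rw [hpP 0 i] at h1
    exact ENNReal.ofReal_le_one.mp h1
  set χ : ℝ := 1 - p i + p i * ζ with hχdef
  have hχ0 : 0 < χ := by rw [hχdef]; nlinarith
  have hχ1 : χ < 1 := by rw [hχdef]; nlinarith
  set M : ℝ := ⨆ ℓ' : ℕ, m ℓ' i with hMdef
  have hmM : ∀ j : ℕ, m j i ≤ M := fun j => le_ciSup (hmbdd i) j
  have hm0 : (0:ℝ) ≤ m 0 i := by
    rw [← hm 0 i]; exact integral_nonneg fun ω => norm_nonneg _
  have hM0 : (0:ℝ) ≤ M := le_trans hm0 (hmM 0)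
  -- measurability and bounds for the indicator-type factors
  have humi : ∀ k : ℕ, Measurable fun ω => u k ω i :=
    fun k => (measurable_pi_apply i).comp (humeas k)
  have hVmeas : ∀ (s : ℕ → Bool) (k : ℕ),
      Measurable fun ω => (if s k then u k ω i else 1 - u k ω i) := by
    intro s k
    by_cases h : s k
    · simp only [if_pos h]; exact humi k
    · simp only [if_neg h]; exact measurable_const.sub (humi k)
  have hV01 : ∀ (s : ℕ → Bool) (k : ℕ) (ω : Ω),
      (if s k then u k ω i else 1 - u k ω i) = 0 ∨
        (if s k then u k ω i else 1 - u k ω i) = 1 := by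
    intro s k ω
    rcases h01 k ω i with h | h <;> by_cases hs : s k <;> simp [h, hs]
  have hVnn : ∀ (s : ℕ → Bool) (k : ℕ) (ω : Ω),
      0 ≤ (if s k then u k ω i else 1 - u k ω i) := by
    intro s k ω
    rcases hV01 s k ω with h | h <;> rw [h] <;> norm_num
  have hVle : ∀ (s : ℕ → Bool) (k : ℕ) (ω : Ω),
      (if s k then u k ω i else 1 - u k ω i) ≤ 1 := by
    intro s k ω
    rcases hV01 s k ω with h | h <;> rw [h] <;> norm_num
  have hVint : ∀ (s : ℕ → Bool) (k : ℕ),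
      Integrable (fun ω => (if s k then u k ω i else 1 - u k ω i)) μ := by
    intro s k
    refine (integrable_const (1:ℝ)).mono' (hVmeas s k).aestronglyMeasurable ?_
    refine Filter.Eventually.of_forall fun ω => ?_
    rcases hV01 s k ω with h | h <;> simp [h]
  have hPnn : ∀ (s : ℕ → Bool) (F : Finset ℕ) (ω : Ω),
      0 ≤ ∏ k ∈ F, (if s k then u k ω i else 1 - u k ω i) :=
    fun s F ω => Finset.prod_nonneg fun k _ => hVnn s k ω
  have hPle : ∀ (s : ℕ → Bool) (F : Finset ℕ) (ω : Ω),
      (∏ k ∈ F, (if s k then u k ω i else 1 - u k ω i)) ≤ 1 :=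
    fun s F ω => Finset.prod_le_one (fun k _ => hVnn s k ω) (fun k _ => hVle s k ω)
  have hPmeas : ∀ (s : ℕ → Bool) (F : Finset ℕ),
      Measurable fun ω => ∏ k ∈ F, (if s k then u k ω i else 1 - u k ω i) :=
    fun s F => Finset.measurable_prod F fun k _ => hVmeas s k
  have hnormP : ∀ (s : ℕ → Bool) (F : Finset ℕ) (ω : Ω),
      ‖∏ k ∈ F, (if s k then u k ω i else 1 - u k ω i)‖ ≤ 1 := by
    intro s F ω
    rw [Real.norm_eq_abs, abs_of_nonneg (hPnn s F ω)]
    exact hPle s F ω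
  have hPint : ∀ (s : ℕ → Bool) (F : Finset ℕ),
      Integrable (fun ω => ∏ k ∈ F, (if s k then u k ω i else 1 - u k ω i)) μ := by
    intro s F
    refine (integrable_const (1:ℝ)).mono' (hPmeas s F).aestronglyMeasurable ?_
    exact Filter.Eventually.of_forall fun ω => hnormP s F ω
  have hQnn : ∀ (s : ℕ → Bool) (F : Finset ℕ),
      0 ≤ ∏ k ∈ F, (if s k then p i else 1 - p i) := by
    intro s F
    refine Finset.prod_nonneg fun k _ => ?_
    by_cases h : s k
    · rw [if_pos h]; linarith
    · rw [if_neg h]; linarith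
  -- mean of a single factor
  have huint : ∀ k : ℕ, Integrable (fun ω => u k ω i) μ := by
    intro k
    refine (integrable_const (1:ℝ)).mono' (humi k).aestronglyMeasurable ?_
    refine Filter.Eventually.of_forall fun ω => ?_
    rcases h01 k ω i with h | h <;> simp [h]
  have hEu : ∀ k : ℕ, ∫ ω, u k ω i ∂μ = p i := by
    intro k
    have hset : MeasurableSet {ω | u k ω i = 1} := humi k (measurableSet_singleton (1:ℝ))
    have heq : (fun ω => u k ω i) = Set.indicator {ω | u k ω i = 1} (fun _ => (1:ℝ)) := by
      funext ω
      by_cases h : u k ω i = 1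
      · simp [Set.indicator_apply, Set.mem_setOf_eq, h]
      · rcases h01 k ω i with h0 | h1
        · simp [Set.indicator_apply, Set.mem_setOf_eq, h, h0]
        · exact absurd h1 h
    rw [heq, integral_indicator hset, setIntegral_const, measureReal_def, hpP k i, smul_eq_mul, mul_one,
      ENNReal.toReal_ofReal hpi.le]
  have hEV : ∀ (s : ℕ → Bool) (k : ℕ),
      ∫ ω, (if s k then u k ω i else 1 - u k ω i) ∂μ = (if s k then p i else 1 - p i) := by
    intro s k
    by_cases h : s k
    · simp only [if_pos h]; exact hEu k
    · simp only [if_neg h]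
      rw [integral_sub (integrable_const 1) (huint k), integral_const, hEu k]
      simp
  -- mean of a product of factors, by independence of the `u`'s
  have hprodint : ∀ (s : ℕ → Bool) (F : Finset ℕ),
      ∫ ω, (∏ k ∈ F, (if s k then u k ω i else 1 - u k ω i)) ∂μ
        = ∏ k ∈ F, (if s k then p i else 1 - p i) := by
    intro s F
    induction F using Finset.induction_on with
    | empty => simp
    | insert a F' hnotmem ih =>
      have hcomp : iIndepFun
          (fun k ω => if s k then u k ω i else 1 - u k ω i) μ :=
        huindep.comp (fun k (x : Fin n → ℝ) => if s k then x i else 1 - x i)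
          (fun k => by
            by_cases h : s k
            · simp only [if_pos h]; exact measurable_pi_apply i
            · simp only [if_neg h]; exact measurable_const.sub (measurable_pi_apply i))
      have hfun : (∏ k ∈ F', fun ω => (if s k then u k ω i else 1 - u k ω i))
          = fun ω => ∏ k ∈ F', (if s k then u k ω i else 1 - u k ω i) := by
        funext ω; simp [Finset.prod_apply]
      have hind2 : IndepFun (fun ω => (if s a then u a ω i else 1 - u a ω i))
          (fun ω => ∏ k ∈ F', (if s k then u k ω i else 1 - u k ω i)) μ := by
        have h2 := (hcomp.indepFun_finset_prod_of_notMem (fun k => hVmeas s k) hnotmem).symm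
        rwa [hfun] at h2
      simp only [Finset.prod_insert hnotmem]
      calc ∫ ω, (if s a then u a ω i else 1 - u a ω i)
              * ∏ k ∈ F', (if s k then u k ω i else 1 - u k ω i) ∂μ
          = (∫ ω, (if s a then u a ω i else 1 - u a ω i) ∂μ)
              * ∫ ω, ∏ k ∈ F', (if s k then u k ω i else 1 - u k ω i) ∂μ :=
            hind2.integral_fun_mul_eq_mul_integral (hVint s a).aestronglyMeasurable (hPint s F').aestronglyMeasurable
        _ = (if s a then p i else 1 - p i) * ∏ k ∈ F', (if s k then p i else 1 - p i) := by
            rw [hEV s a, ih]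
  -- mean of (product of factors) * ‖e_j‖, by independence of the u- and e-processes
  have herrint : ∀ (s : ℕ → Bool) (F : Finset ℕ) (j : ℕ),
      ∫ ω, (∏ k ∈ F, (if s k then u k ω i else 1 - u k ω i)) * ‖e j ω i‖ ∂μ
        = (∏ k ∈ F, (if s k then p i else 1 - p i)) * m j i := by
    intro s F j
    have hφ : Measurable fun w : ℕ → Fin n → ℝ =>
        ∏ k ∈ F, (if s k then w k i else 1 - w k i) := by
      refine Finset.measurable_prod F fun k _ => ?_
      by_cases h : s k
      · simp only [if_pos h]; exact (measurable_pi_apply i).comp (measurable_pi_apply k)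
      · simp only [if_neg h]
        exact measurable_const.sub ((measurable_pi_apply i).comp (measurable_pi_apply k))
    have hψ : Measurable fun z : ℕ → ∀ i', H i' => ‖z j i‖ :=
      ((measurable_pi_apply i).comp (measurable_pi_apply j)).norm
    have hind : IndepFun (fun ω => ∏ k ∈ F, (if s k then u k ω i else 1 - u k ω i))
        (fun ω => ‖e j ω i‖) μ := hue.comp hφ hψ
    calc ∫ ω, (∏ k ∈ F, (if s k then u k ω i else 1 - u k ω i)) * ‖e j ω i‖ ∂μ
        = (∫ ω, ∏ k ∈ F, (if s k then u k ω i else 1 - u k ω i) ∂μ) * ∫ ω, ‖e j ω i‖ ∂μ :=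
          hind.integral_fun_mul_eq_mul_integral (hPint s F).aestronglyMeasurable (heint j i).aestronglyMeasurable
      _ = (∏ k ∈ F, (if s k then p i else 1 - p i)) * m j i := by rw [hprodint s F, hm j i]
  -- the key estimate
  have key : ∀ (j : ℕ) (F : Finset ℕ), (∀ k ∈ F, j ≤ k) → ∀ s : ℕ → Bool,
      ∫ ω, (∏ k ∈ F, (if s k then u k ω i else 1 - u k ω i)) * ‖X j ω i - xstar i‖ ∂μ
        ≤ (∏ k ∈ F, (if s k then p i else 1 - p i))
            * (χ ^ j * ‖x0 i - xstar i‖ + p i * M * ∑ t ∈ Finset.range j, χ ^ t) := by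
    intro j
    induction j with
    | zero =>
      intro F hF s
      have hc : ∀ ω : Ω, ‖X 0 ω i - xstar i‖ = ‖x0 i - xstar i‖ := fun ω => by rw [hX0 ω]
      calc ∫ ω, (∏ k ∈ F, (if s k then u k ω i else 1 - u k ω i)) * ‖X 0 ω i - xstar i‖ ∂μ
          = ∫ ω, (∏ k ∈ F, (if s k then u k ω i else 1 - u k ω i)) * ‖x0 i - xstar i‖ ∂μ := by
            congr 1; funext ω; rw [hc ω]
        _ = (∫ ω, ∏ k ∈ F, (if s k then u k ω i else 1 - u k ω i) ∂μ) * ‖x0 i - xstar i‖ :=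
            integral_mul_const _ _
        _ = (∏ k ∈ F, (if s k then p i else 1 - p i)) * ‖x0 i - xstar i‖ := by
            rw [hprodint s F]
        _ ≤ (∏ k ∈ F, (if s k then p i else 1 - p i))
              * (χ ^ 0 * ‖x0 i - xstar i‖ + p i * M * ∑ t ∈ Finset.range 0, χ ^ t) := by
            simp
    | succ j ih =>
      intro F hF s
      have hjF : j ∉ F := fun hmem => by have := hF j hmem; omega
      have hins : ∀ k ∈ insert j F, j ≤ k := by
        intro k hk
        rcases Finset.mem_insert.mp hk with h | h
        · omega
        · have := hF k h; omega
      -- product identities for the two updated sign choices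
      have hprod0 : ∀ ω : Ω,
          (∏ k ∈ insert j F,
            (if (if k = j then false else s k) then u k ω i else 1 - u k ω i))
          = (1 - u j ω i) * ∏ k ∈ F, (if s k then u k ω i else 1 - u k ω i) := by
        intro ω
        rw [Finset.prod_insert hjF]
        congr 1
        · simp
        · refine Finset.prod_congr rfl fun k hk => ?_
          have hkj : ¬ k = j := fun h => hjF (h ▸ hk)
          simp [hkj]
      have hprod1 : ∀ ω : Ω,
          (∏ k ∈ insert j F,
            (if (if k = j then true else s k) then u k ω i else 1 - u k ω i))
          = u j ω i * ∏ k ∈ F, (if s k then u k ω i else 1 - u k ω i) := by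
        intro ω
        rw [Finset.prod_insert hjF]
        congr 1
        · simp
        · refine Finset.prod_congr rfl fun k hk => ?_
          have hkj : ¬ k = j := fun h => hjF (h ▸ hk)
          simp [hkj]
      have hq0 : (∏ k ∈ insert j F,
            (if (if k = j then false else s k) then p i else 1 - p i))
          = (1 - p i) * ∏ k ∈ F, (if s k then p i else 1 - p i) := by
        rw [Finset.prod_insert hjF]
        congr 1
        · simp
        · refine Finset.prod_congr rfl fun k hk => ?_
          have hkj : ¬ k = j := fun h => hjF (h ▸ hk)
          simp [hkj]
      have hq1 : (∏ k ∈ insert j F,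
            (if (if k = j then true else s k) then p i else 1 - p i))
          = p i * ∏ k ∈ F, (if s k then p i else 1 - p i) := by
        rw [Finset.prod_insert hjF]
        congr 1
        · simp
        · refine Finset.prod_congr rfl fun k hk => ?_
          have hkj : ¬ k = j := fun h => hjF (h ▸ hk)
          simp [hkj]
      -- pointwise recursion bound
      have hpt : ∀ ω : Ω, ‖X (j + 1) ω i - xstar i‖
          ≤ (1 - u j ω i) * ‖X j ω i - xstar i‖ + ζ * (u j ω i * ‖X j ω i - xstar i‖)
            + u j ω i * ‖e j ω i‖ := by
        intro ω
        rcases h01 j ω i with h | h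
        · rw [hXrec j ω i, h]; simp
        · rw [hXrec j ω i, h]
          simp only [sub_self, zero_smul, one_smul, zero_add, one_mul, mul_one]
          have heq : T (X j ω) i + e j ω i - xstar i
              = (T (X j ω) i - xstar i) + e j ω i := by abel
          rw [heq]
          have h2 := norm_add_le (T (X j ω) i - xstar i) (e j ω i)
          have h3 := hT (X j ω) xstar hxstar i
          linarith
      -- integrability of all the pieces
      have I1 : Integrable (fun ω =>
          (∏ k ∈ F, (if s k then u k ω i else 1 - u k ω i)) * ‖X (j + 1) ω i - xstar i‖) μ :=
        (hXint (j + 1) i).bdd_mul (hPmeas s F).aestronglyMeasurable (Filter.Eventually.of_forall (hnormP s F))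
      have IA0 : Integrable (fun ω =>
          (∏ k ∈ insert j F,
            (if (if k = j then false else s k) then u k ω i else 1 - u k ω i))
          * ‖X j ω i - xstar i‖) μ :=
        (hXint j i).bdd_mul (hPmeas _ _).aestronglyMeasurable (Filter.Eventually.of_forall (hnormP _ _))
      have IA1 : Integrable (fun ω =>
          (∏ k ∈ insert j F,
            (if (if k = j then true else s k) then u k ω i else 1 - u k ω i))
          * ‖X j ω i - xstar i‖) μ :=
        (hXint j i).bdd_mul (hPmeas _ _).aestronglyMeasurable (Filter.Eventually.of_forall (hnormP _ _))
      have IAerr : Integrable (fun ω =>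
          (∏ k ∈ insert j F,
            (if (if k = j then true else s k) then u k ω i else 1 - u k ω i))
          * ‖e j ω i‖) μ :=
        (heint j i).bdd_mul (hPmeas _ _).aestronglyMeasurable (Filter.Eventually.of_forall (hnormP _ _))
      -- pointwise comparison after multiplying by the product of factors
      have hptP : ∀ ω : Ω,
          (∏ k ∈ F, (if s k then u k ω i else 1 - u k ω i)) * ‖X (j + 1) ω i - xstar i‖
          ≤ (∏ k ∈ insert j F,
                (if (if k = j then false else s k) then u k ω i else 1 - u k ω i))
              * ‖X j ω i - xstar i‖
            + ζ * ((∏ k ∈ insert j F,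
                (if (if k = j then true else s k) then u k ω i else 1 - u k ω i))
              * ‖X j ω i - xstar i‖)
            + (∏ k ∈ insert j F,
                (if (if k = j then true else s k) then u k ω i else 1 - u k ω i))
              * ‖e j ω i‖ := by
        intro ω
        rw [hprod0 ω, hprod1 ω]
        have h2 := hPnn s F ω
        calc (∏ k ∈ F, (if s k then u k ω i else 1 - u k ω i)) * ‖X (j + 1) ω i - xstar i‖
            ≤ (∏ k ∈ F, (if s k then u k ω i else 1 - u k ω i))
                * ((1 - u j ω i) * ‖X j ω i - xstar i‖
                  + ζ * (u j ω i * ‖X j ω i - xstar i‖) + u j ω i * ‖e j ω i‖) :=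
              mul_le_mul_of_nonneg_left (hpt ω) h2
          _ = ((1 - u j ω i) * ∏ k ∈ F, (if s k then u k ω i else 1 - u k ω i))
                * ‖X j ω i - xstar i‖
              + ζ * ((u j ω i * ∏ k ∈ F, (if s k then u k ω i else 1 - u k ω i))
                * ‖X j ω i - xstar i‖)
              + (u j ω i * ∏ k ∈ F, (if s k then u k ω i else 1 - u k ω i))
                * ‖e j ω i‖ := by ring
      calc ∫ ω, (∏ k ∈ F, (if s k then u k ω i else 1 - u k ω i))
              * ‖X (j + 1) ω i - xstar i‖ ∂μ
          ≤ ∫ ω, ((∏ k ∈ insert j F,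
                (if (if k = j then false else s k) then u k ω i else 1 - u k ω i))
              * ‖X j ω i - xstar i‖
            + ζ * ((∏ k ∈ insert j F,
                (if (if k = j then true else s k) then u k ω i else 1 - u k ω i))
              * ‖X j ω i - xstar i‖)
            + (∏ k ∈ insert j F,
                (if (if k = j then true else s k) then u k ω i else 1 - u k ω i))
              * ‖e j ω i‖) ∂μ :=
            integral_mono I1 ((IA0.add (IA1.const_mul ζ)).add IAerr) hptP
        _ = (∫ ω, (∏ k ∈ insert j F,
                (if (if k = j then false else s k) then u k ω i else 1 - u k ω i))
              * ‖X j ω i - xstar i‖ ∂μ)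
            + ζ * (∫ ω, (∏ k ∈ insert j F,
                (if (if k = j then true else s k) then u k ω i else 1 - u k ω i))
              * ‖X j ω i - xstar i‖ ∂μ)
            + ∫ ω, (∏ k ∈ insert j F,
                (if (if k = j then true else s k) then u k ω i else 1 - u k ω i))
              * ‖e j ω i‖ ∂μ := by
            have e1 : (∫ ω, ((∏ k ∈ insert j F,
                  (if (if k = j then false else s k) then u k ω i else 1 - u k ω i))
                * ‖X j ω i - xstar i‖
              + ζ * ((∏ k ∈ insert j F,
                  (if (if k = j then true else s k) then u k ω i else 1 - u k ω i))
                * ‖X j ω i - xstar i‖)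
              + (∏ k ∈ insert j F,
                  (if (if k = j then true else s k) then u k ω i else 1 - u k ω i))
                * ‖e j ω i‖) ∂μ)
                = (∫ ω, ((∏ k ∈ insert j F,
                    (if (if k = j then false else s k) then u k ω i else 1 - u k ω i))
                  * ‖X j ω i - xstar i‖
                + ζ * ((∏ k ∈ insert j F,
                    (if (if k = j then true else s k) then u k ω i else 1 - u k ω i))
                  * ‖X j ω i - xstar i‖)) ∂μ)
                  + ∫ ω, (∏ k ∈ insert j F,
                      (if (if k = j then true else s k) then u k ω i else 1 - u k ω i))
                    * ‖e j ω i‖ ∂μ :=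
              integral_add (IA0.add (IA1.const_mul ζ)) IAerr
            have e2 : (∫ ω, ((∏ k ∈ insert j F,
                  (if (if k = j then false else s k) then u k ω i else 1 - u k ω i))
                * ‖X j ω i - xstar i‖
              + ζ * ((∏ k ∈ insert j F,
                  (if (if k = j then true else s k) then u k ω i else 1 - u k ω i))
                * ‖X j ω i - xstar i‖)) ∂μ)
                = (∫ ω, (∏ k ∈ insert j F,
                    (if (if k = j then false else s k) then u k ω i else 1 - u k ω i))
                  * ‖X j ω i - xstar i‖ ∂μ)
                  + ∫ ω, ζ * ((∏ k ∈ insert j F,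
                      (if (if k = j then true else s k) then u k ω i else 1 - u k ω i))
                    * ‖X j ω i - xstar i‖) ∂μ :=
              integral_add IA0 (IA1.const_mul ζ)
            have e3 : (∫ ω, ζ * ((∏ k ∈ insert j F,
                  (if (if k = j then true else s k) then u k ω i else 1 - u k ω i))
                * ‖X j ω i - xstar i‖) ∂μ)
                = ζ * ∫ ω, (∏ k ∈ insert j F,
                    (if (if k = j then true else s k) then u k ω i else 1 - u k ω i))
                  * ‖X j ω i - xstar i‖ ∂μ :=
              integral_const_mul ζ _
            rw [e1, e2, e3]
        _ ≤ (∏ k ∈ insert j F, (if (if k = j then false else s k) then p i else 1 - p i))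
              * (χ ^ j * ‖x0 i - xstar i‖ + p i * M * ∑ t ∈ Finset.range j, χ ^ t)
            + ζ * ((∏ k ∈ insert j F, (if (if k = j then true else s k) then p i else 1 - p i))
              * (χ ^ j * ‖x0 i - xstar i‖ + p i * M * ∑ t ∈ Finset.range j, χ ^ t))
            + (∏ k ∈ insert j F, (if (if k = j then true else s k) then p i else 1 - p i))
              * m j i := by
            refine add_le_add (add_le_add ?_ ?_) ?_
            · exact ih (insert j F) hins (fun k => if k = j then false else s k)
            · exact mul_le_mul_of_nonneg_left
                (ih (insert j F) hins (fun k => if k = j then true else s k)) hζ0.le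
            · exact le_of_eq (herrint (fun k => if k = j then true else s k) (insert j F) j)
        _ = ((1 - p i) * ∏ k ∈ F, (if s k then p i else 1 - p i))
              * (χ ^ j * ‖x0 i - xstar i‖ + p i * M * ∑ t ∈ Finset.range j, χ ^ t)
            + ζ * ((p i * ∏ k ∈ F, (if s k then p i else 1 - p i))
              * (χ ^ j * ‖x0 i - xstar i‖ + p i * M * ∑ t ∈ Finset.range j, χ ^ t))
            + (p i * ∏ k ∈ F, (if s k then p i else 1 - p i)) * m j i := by
            rw [hq0, hq1]
        _ ≤ ((1 - p i) * ∏ k ∈ F, (if s k then p i else 1 - p i))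
              * (χ ^ j * ‖x0 i - xstar i‖ + p i * M * ∑ t ∈ Finset.range j, χ ^ t)
            + ζ * ((p i * ∏ k ∈ F, (if s k then p i else 1 - p i))
              * (χ ^ j * ‖x0 i - xstar i‖ + p i * M * ∑ t ∈ Finset.range j, χ ^ t))
            + (p i * ∏ k ∈ F, (if s k then p i else 1 - p i)) * M := by
            have h4 := mul_le_mul_of_nonneg_left (hmM j)
              (mul_nonneg hpi.le (hQnn s F))
            linarith
        _ = (∏ k ∈ F, (if s k then p i else 1 - p i))
              * (χ * (χ ^ j * ‖x0 i - xstar i‖ + p i * M * ∑ t ∈ Finset.range j, χ ^ t)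
                + p i * M) := by
            rw [hχdef]; ring
        _ = (∏ k ∈ F, (if s k then p i else 1 - p i))
              * (χ ^ (j + 1) * ‖x0 i - xstar i‖
                + p i * M * ∑ t ∈ Finset.range (j + 1), χ ^ t) := by
            rw [geom_sum_succ]; ring
  -- conclude
  have hmain := key ℓ ∅ (fun k hk => absurd hk (Finset.notMem_empty k)) (fun _ => true)
  simp only [Finset.prod_empty, one_mul] at hmain
  have hne : χ - 1 ≠ 0 := by intro h; rw [sub_eq_zero] at h; exact absurd h hχ1.ne
  have hne' : 1 - χ ≠ 0 := by intro h; rw [sub_eq_zero] at h; exact absurd h.symm hχ1.ne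
  have hgeom : ∑ t ∈ Finset.range ℓ, χ ^ t = (1 - χ ^ ℓ) / (1 - χ) := by
    rw [geom_sum_eq (fun h => hχ1.ne h) ℓ, div_eq_div_iff hne hne']
    ring
  calc ∫ ω, ‖X ℓ ω i - xstar i‖ ∂μ
      ≤ χ ^ ℓ * ‖x0 i - xstar i‖ + p i * M * ∑ t ∈ Finset.range ℓ, χ ^ t := hmain
    _ = χ ^ ℓ * ‖x0 i - xstar i‖ + p i * ((1 - χ ^ ℓ) / (1 - χ)) * M := by
        rw [hgeom]; ring
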